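/- Fix Δx > 0, k ∈ ℕ, cells C_j = [jΔx, (j+1)Δx), the piecewise polynomial space V and its orthogonal projection P in L²(ℝ). Let s ∈ ℝ and set m = ⌊s/Δx⌋. If f, g ∈ L²(ℝ) agree almost everywhere on C_{j−m−1} ∪ C_{j−m}, then P(τ_s f) = P(τ_s g) almost everywhere on C_j. In other words, the sLdG update on a given cell depends only on the data in two adjacent upwind cells. -/

import Mathlib

open MeasureTheory
open scoped RealInnerProductSpace

/-- Cells are pairwise disjoint. -/
lemma cell_disjoint (Δx : ℝ) (hΔx : 0 < Δx) {j j' : ℤ} (h : j' ≠ j) {x : ℝ}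
    (hx' : x ∈ Set.Ico ((j' : ℝ) * Δx) (((j' : ℝ) + 1) * Δx)) :
    x ∉ Set.Ico ((j : ℝ) * Δx) (((j : ℝ) + 1) * Δx) := by
  intro hx
  rcases lt_or_gt_of_ne h with hlt | hlt
  · have h1 : ((j' : ℝ) + 1) ≤ (j : ℝ) := by exact_mod_cast hlt
    have h2 : ((j' : ℝ) + 1) * Δx ≤ (j : ℝ) * Δx := by nlinarith
    have := hx'.2; have := hx.1; linarith
  · have h1 : ((j : ℝ) + 1) ≤ (j' : ℝ) := by exact_mod_cast hlt
    have h2 : ((j : ℝ) + 1) * Δx ≤ (j' : ℝ) * Δx := by nlinarith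
    have := hx.2; have := hx'.1; linarith

/-- Locality of the orthogonal projection onto piecewise polynomials: if `w = 0` a.e.
on the cell `C_j`, then `P w = 0` a.e. on `C_j`. -/
lemma proj_local (Δx : ℝ) (hΔx : 0 < Δx) (k : ℕ)
    (V : Submodule ℝ (Lp ℝ 2 (volume : Measure ℝ))) [Submodule.HasOrthogonalProjection V]
    (hV : ∀ f : Lp ℝ 2 (volume : Measure ℝ),
      f ∈ V ↔ ∀ j : ℤ, ∃ p : Polynomial ℝ, p.degree ≤ (k : ℕ) ∧
        (f : ℝ → ℝ) =ᵐ[volume.restrict (Set.Ico (j * Δx) ((j + 1) * Δx))]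
          fun x => p.eval x)
    (w : Lp ℝ 2 (volume : Measure ℝ)) (j : ℤ)
    (hw : (w : ℝ → ℝ) =ᵐ[volume.restrict (Set.Ico ((j : ℝ) * Δx) (((j : ℝ) + 1) * Δx))] 0) :
    ((Submodule.orthogonalProjectionOnto V w : Lp ℝ 2 (volume : Measure ℝ)) : ℝ → ℝ)
      =ᵐ[volume.restrict (Set.Ico ((j : ℝ) * Δx) (((j : ℝ) + 1) * Δx))] 0 := by
  set Cj : Set ℝ := Set.Ico ((j : ℝ) * Δx) (((j : ℝ) + 1) * Δx) with hCj
  have hmeas : MeasurableSet Cj := measurableSet_Ico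
  set u : Lp ℝ 2 (volume : Measure ℝ) := (Submodule.orthogonalProjectionOnto V w : Lp ℝ 2 (volume : Measure ℝ))
  -- the truncation of u to the cell C_j
  have humem : MemLp (Cj.indicator (u : ℝ → ℝ)) 2 (volume : Measure ℝ) :=
    (Lp.memLp u).indicator hmeas
  set v : Lp ℝ 2 (volume : Measure ℝ) := humem.toLp _ with hv
  have hvcoe : (v : ℝ → ℝ) =ᵐ[volume] Cj.indicator (u : ℝ → ℝ) := humem.coeFn_toLp
  -- v is in V
  have huV : u ∈ V := (Submodule.orthogonalProjectionOnto V w).2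
  have hvV : v ∈ V := by
    rw [hV]
    intro j'
    by_cases hjj : j' = j
    · subst hjj
      obtain ⟨p, hp, hup⟩ := (hV u).1 huV j'
      refine ⟨p, hp, ?_⟩
      refine Filter.EventuallyEq.trans (Filter.EventuallyEq.trans (ae_restrict_of_ae hvcoe) ?_) hup
      filter_upwards [self_mem_ae_restrict hmeas] with x hx
      simp [Set.indicator_of_mem (show x ∈ Cj from hx)]
    · refine ⟨0, by simp, ?_⟩
      have : ∀ x ∈ Set.Ico ((j' : ℝ) * Δx) (((j' : ℝ) + 1) * Δx),
          Cj.indicator (u : ℝ → ℝ) x = 0 := by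
        intro x hx
        exact Set.indicator_of_notMem (cell_disjoint Δx hΔx hjj hx) _
      refine Filter.EventuallyEq.trans (ae_restrict_of_ae hvcoe) ?_
      filter_upwards [self_mem_ae_restrict (measurableSet_Ico : MeasurableSet
        (Set.Ico ((j' : ℝ) * Δx) (((j' : ℝ) + 1) * Δx)))] with x hx
      simpa using this x hx
  -- orthogonality gives ⟪w - u, v⟫ = 0
  have hortho : ⟪w - u, v⟫ = 0 := V.starProjection_inner_eq_zero w v hvV
  -- w vanishes a.e. on C_j, globally: a.e. x, x ∈ C_j → w x = 0
  have hw' : ∀ᵐ x ∂(volume : Measure ℝ), x ∈ Cj → (w : ℝ → ℝ) x = 0 :=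
    (ae_restrict_iff' hmeas).1 hw
  -- ⟪w, v⟫ = 0
  have hwv : ⟪w, v⟫ = 0 := by
    rw [L2.inner_def]
    refine integral_eq_zero_of_ae ?_
    filter_upwards [hw', hvcoe] with x h1 h2
    by_cases hx : x ∈ Cj
    · simp [h1 hx]
    · simp [h2, Set.indicator_of_notMem hx]
  have huv : ⟪u, v⟫ = 0 := by
    have := hortho
    rw [inner_sub_left, hwv] at this
    linarith
  -- rewrite ⟪u, v⟫ as the integral of u² over C_j
  have hint : ∫ x in Cj, (u : ℝ → ℝ) x * (u : ℝ → ℝ) x ∂(volume : Measure ℝ) = 0 := by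
    rw [← integral_indicator hmeas, ← huv, L2.inner_def]
    refine integral_congr_ae ?_
    filter_upwards [hvcoe] with x h2
    by_cases hx : x ∈ Cj
    · simp [h2, Set.indicator_of_mem hx, real_inner_comm, RCLike.inner_apply,
        starRingEnd_apply, star_trivial, mul_comm, sq]
    · simp [h2, Set.indicator_of_notMem hx]
  have hInt : Integrable (fun x => (u : ℝ → ℝ) x * (u : ℝ → ℝ) x)
      ((volume : Measure ℝ).restrict Cj) := by
    have h3 : Integrable (fun x => ⟪(u : ℝ → ℝ) x, (u : ℝ → ℝ) x⟫)
        (volume : Measure ℝ) := L2.integrable_inner u u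
    exact (h3.congr (Filter.Eventually.of_forall fun x => by
      simp [RCLike.inner_apply, starRingEnd_apply, star_trivial, sq])).restrict
  have hz : (fun x => (u : ℝ → ℝ) x * (u : ℝ → ℝ) x)
      =ᵐ[(volume : Measure ℝ).restrict Cj] 0 :=
    (integral_eq_zero_iff_of_nonneg_ae
      (Filter.Eventually.of_forall fun x => mul_self_nonneg _) hInt).1 hint
  filter_upwards [hz] with x hx
  exact mul_self_eq_zero.1 hx

/-- The sLdG update `f ↦ P(τ_s f)` on a given cell `C_j` depends only on the data in the
two adjacent upwind cells `C_{j-m-1}` and `C_{j-m}`, where `m = ⌊s/Δx⌋`: if `f = g` a.e.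
on `C_{j-m-1} ∪ C_{j-m}`, then `P(τ_s f) = P(τ_s g)` a.e. on `C_j`. -/
theorem stmt_8 (Δx : ℝ) (hΔx : 0 < Δx) (k : ℕ)
    (V : Submodule ℝ (Lp ℝ 2 (volume : Measure ℝ))) [Submodule.HasOrthogonalProjection V]
    (hV : ∀ f : Lp ℝ 2 (volume : Measure ℝ),
      f ∈ V ↔ ∀ j : ℤ, ∃ p : Polynomial ℝ, p.degree ≤ (k : ℕ) ∧
        (f : ℝ → ℝ) =ᵐ[volume.restrict (Set.Ico (j * Δx) ((j + 1) * Δx))]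
          fun x => p.eval x)
    (s : ℝ) (m : ℤ) (hm : m = ⌊s / Δx⌋)
    (f g : Lp ℝ 2 (volume : Measure ℝ)) (j : ℤ)
    (hfg : (f : ℝ → ℝ)
      =ᵐ[volume.restrict (Set.Ico ((j - m - 1 : ℤ) * Δx) (((j - m - 1 : ℤ) + 1) * Δx) ∪
          Set.Ico ((j - m : ℤ) * Δx) (((j - m : ℤ) + 1) * Δx))] (g : ℝ → ℝ))
    (fs gs : Lp ℝ 2 (volume : Measure ℝ))
    (hfs : (fs : ℝ → ℝ) =ᵐ[(volume : Measure ℝ)] fun x => f (x - s))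
    (hgs : (gs : ℝ → ℝ) =ᵐ[(volume : Measure ℝ)] fun x => g (x - s)) :
    ((Submodule.orthogonalProjectionOnto V fs : Lp ℝ 2 (volume : Measure ℝ)) : ℝ → ℝ)
      =ᵐ[volume.restrict (Set.Ico (j * Δx) ((j + 1) * Δx))]
    ((Submodule.orthogonalProjectionOnto V gs : Lp ℝ 2 (volume : Measure ℝ)) : ℝ → ℝ) := by
  set Cj : Set ℝ := Set.Ico ((j : ℝ) * Δx) (((j : ℝ) + 1) * Δx) with hCjdef
  set U : Set ℝ := Set.Ico ((j - m - 1 : ℤ) * Δx) (((j - m - 1 : ℤ) + 1) * Δx) ∪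
      Set.Ico ((j - m : ℤ) * Δx) (((j - m : ℤ) + 1) * Δx) with hUdef
  have hUmeas : MeasurableSet U := measurableSet_Ico.union measurableSet_Ico
  have hCjmeas : MeasurableSet Cj := measurableSet_Ico
  -- bounds on s
  have hms : (m : ℝ) * Δx ≤ s := by
    have h1 : (m : ℝ) ≤ s / Δx := by rw [hm]; exact_mod_cast Int.floor_le (s / Δx)
    calc (m : ℝ) * Δx ≤ (s / Δx) * Δx := by nlinarith
    _ = s := by field_simp
  have hsm : s < ((m : ℝ) + 1) * Δx := by
    have h1 : s / Δx < (m : ℝ) + 1 := by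
      rw [hm]; exact_mod_cast Int.lt_floor_add_one (s / Δx)
    calc s = (s / Δx) * Δx := by field_simp
    _ < ((m : ℝ) + 1) * Δx := by nlinarith
  -- shifting C_j lands in U
  have hkey : ∀ x ∈ Cj, x - s ∈ U := by
    intro x hx
    obtain ⟨hx1, hx2⟩ := hx
    by_cases h : x - s < ((j : ℝ) - (m : ℝ)) * Δx
    · left
      simp only [Set.mem_Ico]
      push_cast
      constructor
      · nlinarith
      · nlinarith
    · right
      simp only [Set.mem_Ico]
      push_cast
      constructor
      · nlinarith
      · nlinarith
  -- f = g off a null set intersected with U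
  have hA : volume ({x : ℝ | ¬ (f : ℝ → ℝ) x = (g : ℝ → ℝ) x} ∩ U) = 0 := by
    have h1 := hfg
    rw [Filter.EventuallyEq, ae_iff, Measure.restrict_apply' hUmeas] at h1
    exact h1
  -- the difference fs - gs vanishes a.e. on C_j
  have hdiff : ((fs - gs : Lp ℝ 2 (volume : Measure ℝ)) : ℝ → ℝ)
      =ᵐ[volume.restrict Cj] 0 := by
    have h1 : ((fs - gs : Lp ℝ 2 (volume : Measure ℝ)) : ℝ → ℝ)
        =ᵐ[volume] fun x => (f : ℝ → ℝ) (x - s) - (g : ℝ → ℝ) (x - s) := by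
      refine (Lp.coeFn_sub fs gs).trans ?_
      filter_upwards [hfs, hgs] with x h2 h3
      simp [h2, h3]
    refine Filter.EventuallyEq.trans (ae_restrict_of_ae h1) ?_
    rw [Filter.EventuallyEq, ae_iff, Measure.restrict_apply' hCjmeas]
    have hB : volume ((fun x => x - s) ⁻¹'
        ({x : ℝ | ¬ (f : ℝ → ℝ) x = (g : ℝ → ℝ) x} ∩ U)) = 0 := by
      have h2 : volume ((fun x => x - s) ⁻¹'
          ({x : ℝ | ¬ (f : ℝ → ℝ) x = (g : ℝ → ℝ) x} ∩ U))
          = volume ({x : ℝ | ¬ (f : ℝ → ℝ) x = (g : ℝ → ℝ) x} ∩ U) := by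
        simpa [sub_eq_add_neg] using measure_preimage_add_right (volume : Measure ℝ) (-s)
          ({x : ℝ | ¬ (f : ℝ → ℝ) x = (g : ℝ → ℝ) x} ∩ U)
      rw [h2]; exact hA
    refine measure_mono_null ?_ hB
    intro x hx
    obtain ⟨hx1, hx2⟩ := hx
    simp only [Set.mem_preimage, Set.mem_inter_iff, Set.mem_setOf_eq]
    refine ⟨?_, hkey x hx2⟩
    intro heq
    apply hx1
    simp only [Set.mem_setOf_eq, Pi.zero_apply]
    simp [heq]
  -- apply locality of the projection
  have hu := proj_local Δx hΔx k V hV (fs - gs) j hdiff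
  have heq : (Submodule.orthogonalProjectionOnto V (fs - gs) : Lp ℝ 2 (volume : Measure ℝ))
      = (Submodule.orthogonalProjectionOnto V fs : Lp ℝ 2 (volume : Measure ℝ))
        - (Submodule.orthogonalProjectionOnto V gs : Lp ℝ 2 (volume : Measure ℝ)) := by
    rw [map_sub]; rfl
  rw [heq] at hu
  have hsub := ae_restrict_of_ae (μ := (volume : Measure ℝ)) (s := Cj)
    (Lp.coeFn_sub ((Submodule.orthogonalProjectionOnto V fs : Lp ℝ 2 (volume : Measure ℝ)))
      ((Submodule.orthogonalProjectionOnto V gs : Lp ℝ 2 (volume : Measure ℝ))))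
  filter_upwards [hu, hsub] with x h1 h2
  have h3 : ((Submodule.orthogonalProjectionOnto V fs : Lp ℝ 2 (volume : Measure ℝ)) : ℝ → ℝ) x
      - ((Submodule.orthogonalProjectionOnto V gs : Lp ℝ 2 (volume : Measure ℝ)) : ℝ → ℝ) x = 0 := by
    rw [← Pi.sub_apply, ← h2]; exact h1
  linarith
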